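/- The polynomials p_n(b,x) = Σ_{j=0}^n (-1)^{n-j}·C(n+j,2j)·(2n/(n+j))·x^j + b·Σ_{j=0}^n (-1)^{n-j}·C(n+j,2j+1)·((2n-1)/(n+j))·x^j satisfy the three-term recurrence p_n(b,x) = (x - s_{n-1})·p_{n-1}(b,x) - t_{n-2}·p_{n-2}(b,x) for n ≥ 2, where s_0 = b+2, s_m = 2 for m ≥ 1, t_0 = 2-b, t_m = 1 for m ≥ 1; with p_0(b,x) = 1 and p_1(b,x) = x - (b+2). -/

import Mathlib

open Polynomial Finset

/-- pₙ(b,x), where the degenerate case n = 0 is p₀ = 1 by convention. -/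
noncomputable def pPoly (b : ℚ) : ℕ → Polynomial ℚ
  | 0 => 1
  | (n + 1) =>
      (∑ j ∈ Finset.range (n + 2),
        Polynomial.C ((-1 : ℚ) ^ (n + 1 - j) * ((n + 1 + j).choose (2 * j) : ℚ) *
            ((2 * (n + 1) : ℚ) / ((n + 1 + j : ℕ) : ℚ))) * X ^ j) +
      Polynomial.C b *
      (∑ j ∈ Finset.range (n + 2),
        Polynomial.C ((-1 : ℚ) ^ (n + 1 - j) * ((n + 1 + j).choose (2 * j + 1) : ℚ) *
            ((2 * (n + 1) - 1 : ℚ) / ((n + 1 + j : ℕ) : ℚ))) * X ^ j)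

namespace Stmt18Aux

open Nat

noncomputable def c1 (n j : ℕ) : ℚ :=
  (-1 : ℚ) ^ (n - j) * ((n + j).choose (2 * j) : ℚ) * ((2 * (n : ℚ)) / ((n + j : ℕ) : ℚ))

noncomputable def c2 (n j : ℕ) : ℚ :=
  (-1 : ℚ) ^ (n - j) * ((n + j).choose (2 * j + 1) : ℚ) *
    ((2 * (n : ℚ) - 1) / ((n + j : ℕ) : ℚ))

lemma fact_cast_ne (n : ℕ) : ((n ! : ℕ) : ℚ) ≠ 0 :=
  Nat.cast_ne_zero.mpr (Nat.factorial_ne_zero n)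

lemma c1_zero {n j : ℕ} (h : n < j) : c1 n j = 0 := by
  simp [c1, Nat.choose_eq_zero_of_lt (show n + j < 2 * j by omega)]

lemma c2_zero {n j : ℕ} (h : n ≤ j) : c2 n j = 0 := by
  simp [c2, Nat.choose_eq_zero_of_lt (show n + j < 2 * j + 1 by omega)]

lemma pPoly_eq (b : ℚ) (n : ℕ) :
    pPoly b (n + 1) = (∑ j ∈ Finset.range (n + 2), C (c1 (n + 1) j) * X ^ j) +
      C b * ∑ j ∈ Finset.range (n + 2), C (c2 (n + 1) j) * X ^ j := by
  rw [pPoly]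
  congr 1
  · refine Finset.sum_congr rfl fun j _ => ?_
    congr 1
    simp only [c1]
    push_cast
    ring
  · congr 1
    refine Finset.sum_congr rfl fun j _ => ?_
    congr 1
    simp only [c2]
    push_cast
    ring

lemma coeff_pPoly (b : ℚ) (n j : ℕ) :
    (pPoly b (n + 1)).coeff j = c1 (n + 1) j + b * c2 (n + 1) j := by
  rw [pPoly_eq]
  simp only [coeff_add, coeff_C_mul, C_mul_X_pow_eq_monomial, finset_sum_coeff,
    coeff_monomial, Finset.sum_ite_eq', Finset.mem_range]
  by_cases h : j < n + 2
  · simp [h]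
  · rw [if_neg h, c1_zero (by omega : n + 1 < j), c2_zero (by omega : n + 1 ≤ j)]
    simp

lemma coeff_pPoly' (b : ℚ) (n j : ℕ) (h : 1 ≤ n) :
    (pPoly b n).coeff j = c1 n j + b * c2 n j := by
  match n, h with
  | (n + 1), _ => exact coeff_pPoly b n j

lemma c1_rec_main (i k : ℕ) :
    c1 (i + k + 3) (i + 1) = c1 (i + k + 2) i - 2 * c1 (i + k + 2) (i + 1) - c1 (i + k + 1) (i + 1) := by
  have h0 : ((i + k + 3 + (i + 1)).choose (2 * (i + 1)) : ℚ)
      = ((2*i+k+4)! : ℚ) / (((2*i+2)! : ℚ) * ((k+2)! : ℚ)) := by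
    rw [show i + k + 3 + (i + 1) = 2*i+k+4 by omega, show 2 * (i+1) = 2*i+2 by omega,
      Nat.cast_choose ℚ (show 2*i+2 ≤ 2*i+k+4 by omega), show 2*i+k+4 - (2*i+2) = k+2 by omega]
  have h1 : ((i + k + 2 + i).choose (2 * i) : ℚ)
      = ((2*i+k+2)! : ℚ) / (((2*i)! : ℚ) * ((k+2)! : ℚ)) := by
    rw [show i + k + 2 + i = 2*i+k+2 by omega,
      Nat.cast_choose ℚ (show 2*i ≤ 2*i+k+2 by omega), show 2*i+k+2 - 2*i = k+2 by omega]
  have h2 : ((i + k + 2 + (i + 1)).choose (2 * (i + 1)) : ℚ)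
      = ((2*i+k+3)! : ℚ) / (((2*i+2)! : ℚ) * ((k+1)! : ℚ)) := by
    rw [show i + k + 2 + (i + 1) = 2*i+k+3 by omega, show 2 * (i+1) = 2*i+2 by omega,
      Nat.cast_choose ℚ (show 2*i+2 ≤ 2*i+k+3 by omega), show 2*i+k+3 - (2*i+2) = k+1 by omega]
  have h3 : ((i + k + 1 + (i + 1)).choose (2 * (i + 1)) : ℚ)
      = ((2*i+k+2)! : ℚ) / (((2*i+2)! : ℚ) * ((k)! : ℚ)) := by
    rw [show i + k + 1 + (i + 1) = 2*i+k+2 by omega, show 2 * (i+1) = 2*i+2 by omega,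
      Nat.cast_choose ℚ (show 2*i+2 ≤ 2*i+k+2 by omega), show 2*i+k+2 - (2*i+2) = k by omega]
  have f0 : ((2*i+k+4)! : ℚ) = (2*(i:ℚ)+k+4)*(2*i+k+3)*(2*i+k+2)*((2*i+k+1)! : ℚ) := by
    rw [show 2*i+k+4 = (2*i+k+3)+1 by omega, Nat.factorial_succ,
      show 2*i+k+3 = (2*i+k+2)+1 by omega, Nat.factorial_succ,
      show 2*i+k+2 = (2*i+k+1)+1 by omega, Nat.factorial_succ]
    push_cast; ring
  have f1 : ((2*i+k+3)! : ℚ) = (2*(i:ℚ)+k+3)*(2*i+k+2)*((2*i+k+1)! : ℚ) := by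
    rw [show 2*i+k+3 = (2*i+k+2)+1 by omega, Nat.factorial_succ,
      show 2*i+k+2 = (2*i+k+1)+1 by omega, Nat.factorial_succ]
    push_cast; ring
  have f2 : ((2*i+k+2)! : ℚ) = (2*(i:ℚ)+k+2)*((2*i+k+1)! : ℚ) := by
    rw [show 2*i+k+2 = (2*i+k+1)+1 by omega, Nat.factorial_succ]
    push_cast; ring
  have f3 : ((2*i+2)! : ℚ) = (2*(i:ℚ)+2)*(2*i+1)*((2*i)! : ℚ) := by
    rw [show 2*i+2 = (2*i+1)+1 by omega, Nat.factorial_succ,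
      show 2*i+1 = (2*i)+1 by omega, Nat.factorial_succ]
    push_cast; ring
  have f4 : ((k+2)! : ℚ) = ((k:ℚ)+2)*(k+1)*((k)! : ℚ) := by
    rw [show k+2 = (k+1)+1 by omega, Nat.factorial_succ, Nat.factorial_succ]
    push_cast; ring
  have f5 : ((k+1)! : ℚ) = ((k:ℚ)+1)*((k)! : ℚ) := by
    rw [Nat.factorial_succ]; push_cast; ring
  have s0 : i + k + 3 - (i + 1) = k + 2 := by omega
  have s1 : i + k + 2 - i = k + 2 := by omega
  have s2 : i + k + 2 - (i + 1) = k + 1 := by omega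
  have s3 : i + k + 1 - (i + 1) = k := by omega
  have d0 : ((i + k + 3 + (i + 1) : ℕ) : ℚ) = 2*(i:ℚ)+k+4 := by push_cast; ring
  have d1 : ((i + k + 2 + i : ℕ) : ℚ) = 2*(i:ℚ)+k+2 := by push_cast; ring
  have d2 : ((i + k + 2 + (i + 1) : ℕ) : ℚ) = 2*(i:ℚ)+k+3 := by push_cast; ring
  have d3 : ((i + k + 1 + (i + 1) : ℕ) : ℚ) = 2*(i:ℚ)+k+2 := by push_cast; ring
  rw [c1, c1, c1, c1, h0, h1, h2, h3, s0, s1, s2, s3, d0, d1, d2, d3, f0, f1, f2, f3, f4, f5]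
  have n1 : ((2*i+k+1)! : ℚ) ≠ 0 := fact_cast_ne _
  have n2 : ((2*i)! : ℚ) ≠ 0 := fact_cast_ne _
  have n3 : ((k)! : ℚ) ≠ 0 := fact_cast_ne _
  have n4 : (2*(i:ℚ)+k+4) ≠ 0 := by positivity
  have n5 : (2*(i:ℚ)+k+3) ≠ 0 := by positivity
  have n6 : (2*(i:ℚ)+k+2) ≠ 0 := by positivity
  have n7 : (2*(i:ℚ)+2) ≠ 0 := by positivity
  have n8 : (2*(i:ℚ)+1) ≠ 0 := by positivity
  have n9 : ((k:ℚ)+2) ≠ 0 := by positivity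
  have n10 : ((k:ℚ)+1) ≠ 0 := by positivity
  field_simp
  push_cast
  ring

lemma c2_rec_main (i k : ℕ) :
    c2 (i + k + 4) (i + 1) = c2 (i + k + 3) i - 2 * c2 (i + k + 3) (i + 1) - c2 (i + k + 2) (i + 1) := by
  have h0 : ((i + k + 4 + (i + 1)).choose (2 * (i + 1) + 1) : ℚ)
      = ((2*i+k+5)! : ℚ) / (((2*i+3)! : ℚ) * ((k+2)! : ℚ)) := by
    rw [show i + k + 4 + (i + 1) = 2*i+k+5 by omega, show 2 * (i+1) + 1 = 2*i+3 by omega,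
      Nat.cast_choose ℚ (show 2*i+3 ≤ 2*i+k+5 by omega), show 2*i+k+5 - (2*i+3) = k+2 by omega]
  have h1 : ((i + k + 3 + i).choose (2 * i + 1) : ℚ)
      = ((2*i+k+3)! : ℚ) / (((2*i+1)! : ℚ) * ((k+2)! : ℚ)) := by
    rw [show i + k + 3 + i = 2*i+k+3 by omega,
      Nat.cast_choose ℚ (show 2*i+1 ≤ 2*i+k+3 by omega), show 2*i+k+3 - (2*i+1) = k+2 by omega]
  have h2 : ((i + k + 3 + (i + 1)).choose (2 * (i + 1) + 1) : ℚ)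
      = ((2*i+k+4)! : ℚ) / (((2*i+3)! : ℚ) * ((k+1)! : ℚ)) := by
    rw [show i + k + 3 + (i + 1) = 2*i+k+4 by omega, show 2 * (i+1) + 1 = 2*i+3 by omega,
      Nat.cast_choose ℚ (show 2*i+3 ≤ 2*i+k+4 by omega), show 2*i+k+4 - (2*i+3) = k+1 by omega]
  have h3 : ((i + k + 2 + (i + 1)).choose (2 * (i + 1) + 1) : ℚ)
      = ((2*i+k+3)! : ℚ) / (((2*i+3)! : ℚ) * ((k)! : ℚ)) := by
    rw [show i + k + 2 + (i + 1) = 2*i+k+3 by omega, show 2 * (i+1) + 1 = 2*i+3 by omega,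
      Nat.cast_choose ℚ (show 2*i+3 ≤ 2*i+k+3 by omega), show 2*i+k+3 - (2*i+3) = k by omega]
  have f0 : ((2*i+k+5)! : ℚ) = (2*(i:ℚ)+k+5)*(2*i+k+4)*(2*i+k+3)*((2*i+k+2)! : ℚ) := by
    rw [show 2*i+k+5 = (2*i+k+4)+1 by omega, Nat.factorial_succ,
      show 2*i+k+4 = (2*i+k+3)+1 by omega, Nat.factorial_succ,
      show 2*i+k+3 = (2*i+k+2)+1 by omega, Nat.factorial_succ]
    push_cast; ring
  have f1 : ((2*i+k+4)! : ℚ) = (2*(i:ℚ)+k+4)*(2*i+k+3)*((2*i+k+2)! : ℚ) := by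
    rw [show 2*i+k+4 = (2*i+k+3)+1 by omega, Nat.factorial_succ,
      show 2*i+k+3 = (2*i+k+2)+1 by omega, Nat.factorial_succ]
    push_cast; ring
  have f2 : ((2*i+k+3)! : ℚ) = (2*(i:ℚ)+k+3)*((2*i+k+2)! : ℚ) := by
    rw [show 2*i+k+3 = (2*i+k+2)+1 by omega, Nat.factorial_succ]
    push_cast; ring
  have f3 : ((2*i+3)! : ℚ) = (2*(i:ℚ)+3)*(2*i+2)*((2*i+1)! : ℚ) := by
    rw [show 2*i+3 = (2*i+2)+1 by omega, Nat.factorial_succ,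
      show 2*i+2 = (2*i+1)+1 by omega, Nat.factorial_succ]
    push_cast; ring
  have f4 : ((k+2)! : ℚ) = ((k:ℚ)+2)*(k+1)*((k)! : ℚ) := by
    rw [show k+2 = (k+1)+1 by omega, Nat.factorial_succ, Nat.factorial_succ]
    push_cast; ring
  have f5 : ((k+1)! : ℚ) = ((k:ℚ)+1)*((k)! : ℚ) := by
    rw [Nat.factorial_succ]; push_cast; ring
  have s0 : i + k + 4 - (i + 1) = k + 3 := by omega
  have s1 : i + k + 3 - i = k + 3 := by omega
  have s2 : i + k + 3 - (i + 1) = k + 2 := by omega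
  have s3 : i + k + 2 - (i + 1) = k + 1 := by omega
  have d0 : ((i + k + 4 + (i + 1) : ℕ) : ℚ) = 2*(i:ℚ)+k+5 := by push_cast; ring
  have d1 : ((i + k + 3 + i : ℕ) : ℚ) = 2*(i:ℚ)+k+3 := by push_cast; ring
  have d2 : ((i + k + 3 + (i + 1) : ℕ) : ℚ) = 2*(i:ℚ)+k+4 := by push_cast; ring
  have d3 : ((i + k + 2 + (i + 1) : ℕ) : ℚ) = 2*(i:ℚ)+k+3 := by push_cast; ring
  rw [c2, c2, c2, c2, h0, h1, h2, h3, s0, s1, s2, s3, d0, d1, d2, d3, f0, f1, f2, f3, f4, f5]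
  have n1 : ((2*i+k+2)! : ℚ) ≠ 0 := fact_cast_ne _
  have n2 : ((2*i+1)! : ℚ) ≠ 0 := fact_cast_ne _
  have n3 : ((k)! : ℚ) ≠ 0 := fact_cast_ne _
  have n4 : (2*(i:ℚ)+k+5) ≠ 0 := by positivity
  have n5 : (2*(i:ℚ)+k+4) ≠ 0 := by positivity
  have n6 : (2*(i:ℚ)+k+3) ≠ 0 := by positivity
  have n7 : (2*(i:ℚ)+3) ≠ 0 := by positivity
  have n8 : (2*(i:ℚ)+2) ≠ 0 := by positivity
  have n9 : ((k:ℚ)+2) ≠ 0 := by positivity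
  have n10 : ((k:ℚ)+1) ≠ 0 := by positivity
  field_simp
  push_cast
  ring

lemma c1_rec0 (m : ℕ) : c1 (m + 3) 0 = -(2 * c1 (m + 2) 0) - c1 (m + 1) 0 := by
  simp only [c1, Nat.choose_zero_right, add_zero, Nat.sub_zero, Nat.cast_one, mul_zero]
  have h1 : ((m : ℚ) + 3) ≠ 0 := by positivity
  have h2 : ((m : ℚ) + 2) ≠ 0 := by positivity
  have h3 : ((m : ℚ) + 1) ≠ 0 := by positivity
  push_cast
  field_simp
  ring

lemma c2_rec0 (m : ℕ) : c2 (m + 3) 0 = -(2 * c2 (m + 2) 0) - c2 (m + 1) 0 := by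
  simp only [c2, Nat.choose_one_right, add_zero, Nat.sub_zero, mul_zero, zero_add]
  have h1 : ((m : ℚ) + 3) ≠ 0 := by positivity
  have h2 : ((m : ℚ) + 2) ≠ 0 := by positivity
  have h3 : ((m : ℚ) + 1) ≠ 0 := by positivity
  push_cast
  field_simp
  ring

lemma c1_rec_sub (m : ℕ) :
    c1 (m + 3) (m + 2) = c1 (m + 2) (m + 1) - 2 * c1 (m + 2) (m + 2) - c1 (m + 1) (m + 2) := by
  rw [c1_zero (by omega : m + 1 < m + 2)]
  have A : (m + 3 + (m + 2)).choose (2 * (m + 2)) = 2*m+5 := by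
    rw [show m + 3 + (m + 2) = 2*m+5 by omega, show 2 * (m + 2) = (2*m+5) - 1 by omega,
      Nat.choose_symm (by omega), Nat.choose_one_right]
  have B : (m + 2 + (m + 1)).choose (2 * (m + 1)) = 2*m+3 := by
    rw [show m + 2 + (m + 1) = 2*m+3 by omega, show 2 * (m + 1) = (2*m+3) - 1 by omega,
      Nat.choose_symm (by omega), Nat.choose_one_right]
  have D : (m + 2 + (m + 2)).choose (2 * (m + 2)) = 1 := by
    rw [show m + 2 + (m + 2) = 2*(m+2) by omega, Nat.choose_self]
  rw [c1, c1, c1, A, B, D]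
  rw [show m + 3 - (m + 2) = 1 by omega, show m + 2 - (m + 1) = 1 by omega,
    show m + 2 - (m + 2) = 0 by omega]
  have h1 : (2*(m : ℚ)+5) ≠ 0 := by positivity
  have h2 : (2*(m : ℚ)+3) ≠ 0 := by positivity
  have h3 : (2*(m : ℚ)+4) ≠ 0 := by positivity
  push_cast
  field_simp
  ring

lemma c1_rec_top (m : ℕ) :
    c1 (m + 3) (m + 3) = c1 (m + 2) (m + 2) - 2 * c1 (m + 2) (m + 3) - c1 (m + 1) (m + 3) := by
  rw [c1_zero (by omega : m + 2 < m + 3), c1_zero (by omega : m + 1 < m + 3)]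
  rw [c1, c1]
  rw [show m + 3 + (m + 3) = 2*(m+3) by omega, Nat.choose_self,
    show m + 2 + (m + 2) = 2*(m+2) by omega, Nat.choose_self,
    Nat.sub_self, Nat.sub_self]
  have h1 : (2*((m:ℚ)+3)) ≠ 0 := by positivity
  have h2 : (2*((m:ℚ)+2)) ≠ 0 := by positivity
  push_cast
  field_simp
  ring

lemma c2_rec_m (m : ℕ) :
    c2 (m + 3) (m + 1) = c2 (m + 2) m - 2 * c2 (m + 2) (m + 1) - c2 (m + 1) (m + 1) := by
  rw [c2_zero (le_refl (m+1))]
  have A : (m + 3 + (m + 1)).choose (2 * (m + 1) + 1) = 2*m+4 := by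
    rw [show m + 3 + (m + 1) = 2*m+4 by omega, show 2 * (m + 1) + 1 = (2*m+4) - 1 by omega,
      Nat.choose_symm (by omega), Nat.choose_one_right]
  have B : (m + 2 + m).choose (2 * m + 1) = 2*m+2 := by
    rw [show m + 2 + m = 2*m+2 by omega, show 2 * m + 1 = (2*m+2) - 1 by omega,
      Nat.choose_symm (by omega), Nat.choose_one_right]
  have D : (m + 2 + (m + 1)).choose (2 * (m + 1) + 1) = 1 := by
    rw [show m + 2 + (m + 1) = 2*(m+1)+1 by omega, show 2 * (m + 1) + 1 = 2*(m+1)+1 by omega,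
      Nat.choose_self]
  rw [c2, c2, c2, A, B, D]
  rw [show m + 3 - (m + 1) = 2 by omega, show m + 2 - m = 2 by omega,
    show m + 2 - (m + 1) = 1 by omega]
  have h1 : (2*(m : ℚ)+4) ≠ 0 := by positivity
  have h2 : (2*(m : ℚ)+2) ≠ 0 := by positivity
  have h3 : (2*(m : ℚ)+3) ≠ 0 := by positivity
  push_cast
  field_simp
  ring

lemma c2_rec_sub (m : ℕ) :
    c2 (m + 3) (m + 2) = c2 (m + 2) (m + 1) - 2 * c2 (m + 2) (m + 2) - c2 (m + 1) (m + 2) := by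
  rw [c2_zero (by omega : m + 2 ≤ m + 2), c2_zero (by omega : m + 1 ≤ m + 2)]
  have A : (m + 3 + (m + 2)).choose (2 * (m + 2) + 1) = 1 := by
    rw [show m + 3 + (m + 2) = 2*m+5 by omega, show 2 * (m + 2) + 1 = 2*m+5 by omega,
      Nat.choose_self]
  have B : (m + 2 + (m + 1)).choose (2 * (m + 1) + 1) = 1 := by
    rw [show m + 2 + (m + 1) = 2*m+3 by omega, show 2 * (m + 1) + 1 = 2*m+3 by omega,
      Nat.choose_self]
  rw [c2, c2, A, B]
  rw [show m + 3 - (m + 2) = 1 by omega, show m + 2 - (m + 1) = 1 by omega]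
  have h1 : (2*(m : ℚ)+5) ≠ 0 := by positivity
  have h2 : (2*(m : ℚ)+3) ≠ 0 := by positivity
  push_cast
  field_simp
  ring

lemma c1_recS (m i : ℕ) :
    c1 (m + 3) (i + 1) = c1 (m + 2) i - 2 * c1 (m + 2) (i + 1) - c1 (m + 1) (i + 1) := by
  rcases le_or_gt i m with h | h
  · obtain ⟨k, rfl⟩ := Nat.exists_eq_add_of_le h
    exact c1_rec_main i k
  by_cases h1 : i = m + 1
  · subst h1
    rw [show m + 1 + 1 = m + 2 by omega]
    exact c1_rec_sub m
  by_cases h2 : i = m + 2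
  · subst h2
    rw [show m + 2 + 1 = m + 3 by omega]
    exact c1_rec_top m
  · rw [c1_zero (by omega : m + 3 < i + 1), c1_zero (by omega : m + 2 < i),
      c1_zero (by omega : m + 2 < i + 1), c1_zero (by omega : m + 1 < i + 1)]
    ring

lemma c2_recS (m i : ℕ) :
    c2 (m + 3) (i + 1) = c2 (m + 2) i - 2 * c2 (m + 2) (i + 1) - c2 (m + 1) (i + 1) := by
  rcases lt_or_ge i m with h | h
  · obtain ⟨k, rfl⟩ := Nat.exists_eq_add_of_lt h
    rw [show i + k + 1 + 3 = i + k + 4 by omega, show i + k + 1 + 2 = i + k + 3 by omega,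
      show i + k + 1 + 1 = i + k + 2 by omega]
    exact c2_rec_main i k
  by_cases h1 : i = m
  · subst h1
    exact c2_rec_m i
  by_cases h2 : i = m + 1
  · subst h2
    rw [show m + 1 + 1 = m + 2 by omega]
    exact c2_rec_sub m
  · rw [c2_zero (by omega : m + 3 ≤ i + 1), c2_zero (by omega : m + 2 ≤ i),
      c2_zero (by omega : m + 2 ≤ i + 1), c2_zero (by omega : m + 1 ≤ i + 1)]
    ring

lemma pPoly_rec3 (b : ℚ) (m : ℕ) :
    pPoly b (m + 3) = (X - C (2 : ℚ)) * pPoly b (m + 2) - C (1 : ℚ) * pPoly b (m + 1) := by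
  ext j
  rw [coeff_sub, coeff_C_mul, sub_mul, coeff_sub, coeff_C_mul,
    coeff_pPoly' b (m + 3) j (by omega), coeff_pPoly' b (m + 2) j (by omega),
    coeff_pPoly' b (m + 1) j (by omega)]
  rcases j with _ | i
  · rw [mul_coeff_zero, coeff_X_zero, coeff_pPoly' b (m + 2) 0 (by omega)]
    rw [c1_rec0 m, c2_rec0 m]
    ring
  · rw [coeff_X_mul, coeff_pPoly' b (m + 2) i (by omega),
      c1_recS m i, c2_recS m i]
    ring

lemma pPoly_zero (b : ℚ) : pPoly b 0 = 1 := by rw [pPoly]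

lemma pPoly_one (b : ℚ) : pPoly b 1 = X - C (b + 2) := by
  ext j
  rw [coeff_pPoly' b 1 j (by omega)]
  rcases j with _ | _ | i
  · norm_num [c1, c2, coeff_X_zero]
  · norm_num [c1, c2, coeff_X_one]
  · rw [c1_zero (by omega), c2_zero (by omega)]
    simp [coeff_X, coeff_C]

lemma pPoly_two (b : ℚ) :
    pPoly b 2 = (X - C (2 : ℚ)) * pPoly b 1 - C (2 - b) * pPoly b 0 := by
  rw [pPoly_one, pPoly_zero]
  ext j
  rw [coeff_pPoly' b 2 j (by omega)]
  have hR : (X - C (2:ℚ)) * (X - C (b + 2)) - C (2 - b) * 1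
      = C 1 * X ^ 2 + C (-(b + 4)) * X ^ 1 + C (3 * b + 2) * X ^ 0 := by
    simp only [map_sub, map_add, map_mul, map_one, map_ofNat, map_neg]
    push_cast
    ring
  rw [hR]
  simp only [C_mul_X_pow_eq_monomial, coeff_add, coeff_monomial]
  rcases j with _ | _ | _ | i
  · norm_num [c1, c2]
    try ring
  · norm_num [c1, c2, Nat.choose]
    try ring
  · norm_num [c1, c2, Nat.choose]
    try ring
  · rw [c1_zero (by omega), c2_zero (by omega)]
    norm_num

end Stmt18Aux

open Stmt18Aux in
theorem stmt_18 (b : ℚ) :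
    pPoly b 0 = 1 ∧ pPoly b 1 = X - Polynomial.C (b + 2) ∧
      ∀ n : ℕ, 2 ≤ n →
        pPoly b n = (X - Polynomial.C (2 : ℚ)) * pPoly b (n - 1) -
          Polynomial.C (if n = 2 then 2 - b else 1) * pPoly b (n - 2) := by
  refine ⟨pPoly_zero b, pPoly_one b, ?_⟩
  intro n hn
  by_cases h2 : n = 2
  · subst h2
    rw [if_pos rfl]
    exact pPoly_two b
  · obtain ⟨m, rfl⟩ : ∃ m, n = m + 3 := ⟨n - 3, by omega⟩
    rw [if_neg h2, show m + 3 - 1 = m + 2 by omega, show m + 3 - 2 = m + 1 by omega]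
    exact pPoly_rec3 b m
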